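/- Let k be a field and F a formal group law over k. For r ∈ k⟦t⟧ let r(F(t,X)) ∈ k⟦t,X⟧ denote the substitution of F(t,X) for t (well-defined since F(t,X) has zero constant term), and define ∂_n(r) ∈ k⟦t⟧ to be the coefficient of X^n in r(F(t,X)). Then (∂_n)_{n ∈ ℕ} is an HS-derivation on k⟦t⟧ over k (∂_0 = id, each ∂_n additive and vanishing on k for n > 0, ∂_n(xy) = Σ_{j+l=n} ∂_j(x)∂_l(y)), it is F-iterative, and ∂_n(t) equals the coefficient of X^n in F(t,X). This is the canonical F-derivation on k⟦t⟧. -/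

import Mathlib

/-- The coefficient of `X^i Y^j` in a two-variable power series `F`. -/
noncomputable def fglCoeff {k : Type*} [CommRing k] (F : MvPowerSeries (Fin 2) k)
    (i j : ℕ) : k :=
  MvPowerSeries.coeff (Finsupp.single (0 : Fin 2) i + Finsupp.single (1 : Fin 2) j) F

/-- `fglA F i j n` is the coefficient of `X^i Y^j` in `F(X,Y)^n`. -/
noncomputable def fglA {k : Type*} [CommRing k] (F : MvPowerSeries (Fin 2) k)
    (i j n : ℕ) : k :=
  fglCoeff (F ^ n) i j

/-- `F` is a (one-dimensional, commutative-ring-coefficient) formal group law, stated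
coefficient-wise: `F(X,0) = X`, `F(0,Y) = Y` and `F(F(X,Y),Z) = F(X,F(Y,Z))`
(coefficient of `X^i Y^j Z^l` on both sides). -/
def IsFormalGroupLaw {k : Type*} [CommRing k] (F : MvPowerSeries (Fin 2) k) : Prop :=
  (∀ i, fglCoeff F i 0 = if i = 1 then 1 else 0) ∧
  (∀ j, fglCoeff F 0 j = if j = 1 then 1 else 0) ∧
  (∀ i j l, ∑ n ∈ Finset.range (i + j + 1), fglCoeff F n l * fglA F i j n
          = ∑ m ∈ Finset.range (j + l + 1), fglCoeff F i m * fglA F j l m)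

open Finset

section FGLAux

variable {k : Type*} [CommRing k] (F : MvPowerSeries (Fin 2) k)

lemma dec2 (d : Fin 2 →₀ ℕ) :
    Finsupp.single (0 : Fin 2) (d 0) + Finsupp.single (1 : Fin 2) (d 1) = d := by
  ext a
  fin_cases a <;> simp [Finsupp.single_apply]

lemma idx0 (i j : ℕ) :
    (Finsupp.single (0 : Fin 2) i + Finsupp.single (1 : Fin 2) j) 0 = i := by
  simp [Finsupp.single_apply]

lemma idx1 (i j : ℕ) :
    (Finsupp.single (0 : Fin 2) i + Finsupp.single (1 : Fin 2) j) 1 = j := by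
  simp [Finsupp.single_apply]

lemma coeff_idx (i j n : ℕ) :
    MvPowerSeries.coeff (Finsupp.single (0 : Fin 2) i + Finsupp.single (1 : Fin 2) j) (F ^ n)
      = fglA F i j n := rfl

lemma constCoeff0 (hF : IsFormalGroupLaw F) : MvPowerSeries.coeff (0 : Fin 2 →₀ ℕ) F = 0 := by
  have h := hF.1 0
  simp only [fglCoeff, Finsupp.single_zero, add_zero, zero_add] at h
  simpa using h

lemma van (hF : IsFormalGroupLaw F) : ∀ (m : ℕ) (d : Fin 2 →₀ ℕ), d 0 + d 1 < m →
    MvPowerSeries.coeff d (F ^ m) = 0 := by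
  intro m
  induction m with
  | zero => intro d h; omega
  | succ m ih =>
    intro d h
    rw [pow_succ, MvPowerSeries.coeff_mul]
    apply Finset.sum_eq_zero
    intro x hx
    rw [Finset.HasAntidiagonal.mem_antidiagonal] at hx
    have h0 : x.1 0 + x.2 0 = d 0 := by rw [← hx]; simp
    have h1 : x.1 1 + x.2 1 = d 1 := by rw [← hx]; simp
    by_cases h2 : x.2 = 0
    · have : MvPowerSeries.coeff x.2 F = 0 := by rw [h2]; exact constCoeff0 F hF
      rw [this, mul_zero]
    · have hge : 1 ≤ x.2 0 + x.2 1 := by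
        by_contra hc
        push_neg at hc
        apply h2
        have e0 : x.2 0 = 0 := by omega
        have e1 : x.2 1 = 0 := by omega
        rw [← dec2 x.2, e0, e1]; simp
      have : x.1 0 + x.1 1 < m := by omega
      rw [ih x.1 this, zero_mul]

lemma vanA (hF : IsFormalGroupLaw F) (i j n : ℕ) (h : i + j < n) : fglA F i j n = 0 := by
  rw [← coeff_idx]
  apply van F hF
  rw [idx0, idx1]; exact h


lemma antidiag2 {M : Type*} [AddCommMonoid M] (i j : ℕ)
    (f : (Fin 2 →₀ ℕ) → (Fin 2 →₀ ℕ) → M) :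
    ∑ x ∈ Finset.HasAntidiagonal.antidiagonal
        (Finsupp.single (0 : Fin 2) i + Finsupp.single (1 : Fin 2) j),
      f x.1 x.2
    = ∑ p ∈ antidiagonal i, ∑ r ∈ antidiagonal j,
        f (Finsupp.single 0 p.1 + Finsupp.single 1 r.1)
          (Finsupp.single 0 p.2 + Finsupp.single 1 r.2) := by
  rw [← Finset.sum_product']
  refine Finset.sum_nbij' (fun x => ((x.1 0, x.2 0), (x.1 1, x.2 1)))
    (fun q => (Finsupp.single 0 q.1.1 + Finsupp.single 1 q.2.1,
               Finsupp.single 0 q.1.2 + Finsupp.single 1 q.2.2)) ?_ ?_ ?_ ?_ ?_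
  · intro x hx
    rw [Finset.HasAntidiagonal.mem_antidiagonal] at hx
    have h0 : x.1 0 + x.2 0 = i := by
      have := congrArg (fun f => f (0 : Fin 2)) hx
      simpa [Finsupp.single_apply] using this
    have h1 : x.1 1 + x.2 1 = j := by
      have := congrArg (fun f => f (1 : Fin 2)) hx
      simpa [Finsupp.single_apply] using this
    simp [Finset.mem_product, Finset.HasAntidiagonal.mem_antidiagonal, h0, h1]
  · intro q hq
    simp only [Finset.mem_product, Finset.HasAntidiagonal.mem_antidiagonal] at hq
    rw [Finset.HasAntidiagonal.mem_antidiagonal]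
    have : ∀ a b c d : ℕ,
        (Finsupp.single (0:Fin 2) a + Finsupp.single (1:Fin 2) b)
        + (Finsupp.single (0:Fin 2) c + Finsupp.single (1:Fin 2) d)
        = Finsupp.single (0:Fin 2) (a+c) + Finsupp.single (1:Fin 2) (b+d) := by
      intro a b c d
      rw [Finsupp.single_add, Finsupp.single_add]; abel
    rw [this, hq.1, hq.2]
  · intro x hx
    rw [Prod.ext_iff]
    exact ⟨dec2 _, dec2 _⟩
  · intro q hq
    simp [Finsupp.single_apply, Prod.ext_iff]
  · intro x hx
    rw [← dec2 x.1, ← dec2 x.2]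
    simp only [dec2]

lemma coprod (F : MvPowerSeries (Fin 2) k) (i j a b : ℕ) :
    fglA F i j (a + b)
      = ∑ p ∈ antidiagonal i, ∑ r ∈ antidiagonal j,
          fglA F p.1 r.1 a * fglA F p.2 r.2 b := by
  rw [← coeff_idx, pow_add, MvPowerSeries.coeff_mul,
    antidiag2 i j (fun u v => MvPowerSeries.coeff u (F ^ a) * MvPowerSeries.coeff v (F ^ b))]
  rfl

lemma A_one (F : MvPowerSeries (Fin 2) k) (i j : ℕ) : fglA F i j 1 = fglCoeff F i j := by
  rw [fglA, pow_one]

lemma idx_eq_zero_iff (i j : ℕ) :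
    (Finsupp.single (0 : Fin 2) i + Finsupp.single (1 : Fin 2) j = 0) ↔ (i = 0 ∧ j = 0) := by
  constructor
  · intro h
    constructor
    · have := congrArg (fun f => f (0 : Fin 2)) h
      simpa [Finsupp.single_apply] using this
    · have := congrArg (fun f => f (1 : Fin 2)) h
      simpa [Finsupp.single_apply] using this
  · rintro ⟨rfl, rfl⟩; simp

lemma A_zero (F : MvPowerSeries (Fin 2) k) (i j : ℕ) :
    fglA F i j 0 = if i = 0 ∧ j = 0 then 1 else 0 := by
  rw [fglA, pow_zero, fglCoeff, MvPowerSeries.coeff_one]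
  by_cases h : i = 0 ∧ j = 0
  · rw [if_pos ((idx_eq_zero_iff i j).2 h), if_pos h]
  · rw [if_neg (fun hc => h ((idx_eq_zero_iff i j).1 hc)), if_neg h]

lemma unitX (F : MvPowerSeries (Fin 2) k) (hF : IsFormalGroupLaw F) (m : ℕ) :
    ∀ i, fglA F i 0 m = if i = m then 1 else 0 := by
  induction m with
  | zero =>
    intro i
    rw [A_zero]
    by_cases h : i = 0 <;> simp [h]
  | succ m ih =>
    intro i
    rw [show m + 1 = m + 1 from rfl, coprod F i 0 m 1, Finset.Nat.antidiagonal_zero]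
    simp only [Finset.sum_singleton]
    have step : ∀ p ∈ antidiagonal i,
        fglA F p.1 0 m * fglA F p.2 0 1 = if (m, 1) = p then 1 else 0 := by
      intro p hp
      rcases p with ⟨u, v⟩
      rw [ih, A_one, hF.1]
      by_cases h1 : u = m
      · by_cases h2 : v = 1
        · subst h1; subst h2; simp
        · rw [if_neg h2, mul_zero, if_neg (by simp [Prod.ext_iff]; omega)]
      · rw [if_neg h1, zero_mul, if_neg (by simp [Prod.ext_iff]; omega)]
    rw [Finset.sum_congr rfl step, Finset.sum_ite_eq]
    by_cases h : i = m + 1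
    · rw [if_pos (by rw [Finset.HasAntidiagonal.mem_antidiagonal]; omega), if_pos h]
    · rw [if_neg (by rw [Finset.HasAntidiagonal.mem_antidiagonal]; omega), if_neg h]


lemma triangle {M : Type*} [AddCommMonoid M] (N : ℕ) (g : ℕ → ℕ → M)
    (hg : ∀ a b, N < a + b → g a b = 0) :
    ∑ n ∈ range (N + 1), ∑ p ∈ antidiagonal n, g p.1 p.2
      = ∑ a ∈ range (N + 1), ∑ b ∈ range (N + 1), g a b := by
  rw [← Finset.sum_product']
  have h1 : ∑ x ∈ range (N+1) ×ˢ range (N+1), g x.1 x.2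
      = ∑ x ∈ (range (N+1) ×ˢ range (N+1)).filter (fun p => p.1 + p.2 ≤ N), g x.1 x.2 := by
    rw [Finset.sum_filter_of_ne]
    intro x hx hgx
    by_contra hc
    exact hgx (hg x.1 x.2 (by omega))
  rw [h1]
  rw [← Finset.sum_fiberwise_of_maps_to (g := fun p : ℕ × ℕ => p.1 + p.2) (t := range (N+1))
    (fun x hx => by
      simp only [Finset.mem_filter, Finset.mem_product, Finset.mem_range] at hx
      exact Finset.mem_range.2 (by show x.1 + x.2 < N + 1; omega))]
  refine Finset.sum_congr rfl fun n hn => Finset.sum_congr ?_ fun _ _ => rfl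
  ext p
  simp only [Finset.mem_filter, Finset.mem_product, Finset.mem_range, Finset.HasAntidiagonal.mem_antidiagonal]
  rw [Finset.mem_range] at hn
  omega

lemma triangle' {M : Type*} [AddCommMonoid M] (N₁ N₂ : ℕ) (g : ℕ → ℕ → M)
    (hg : ∀ a b, (N₁ < a ∨ N₂ < b) → g a b = 0) :
    ∑ n ∈ range (N₁ + N₂ + 1), ∑ p ∈ antidiagonal n, g p.1 p.2
      = ∑ a ∈ range (N₁ + 1), ∑ b ∈ range (N₂ + 1), g a b := by
  rw [show N₁ + N₂ + 1 = N₁ + N₂ + 1 from rfl, triangle (N₁ + N₂) g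
    (fun a b h => hg a b (by omega))]
  rw [← Finset.sum_product', ← Finset.sum_product']
  refine (Finset.sum_subset ?_ ?_).symm
  · intro p hp
    simp only [Finset.mem_product, Finset.mem_range] at *
    omega
  · intro p hp hnp
    simp only [Finset.mem_product, Finset.mem_range] at *
    exact hg p.1 p.2 (by omega)

lemma Bconv (hF : IsFormalGroupLaw F) (a b i j l : ℕ) :
    ∑ n ∈ range (i + j + 1), fglA F i j n * fglA F n l (a + b)
    = ∑ pi ∈ antidiagonal i, ∑ pj ∈ antidiagonal j, ∑ pl ∈ antidiagonal l,
        (∑ n ∈ range (pi.1 + pj.1 + 1), fglA F pi.1 pj.1 n * fglA F n pl.1 a)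
      * (∑ n ∈ range (pi.2 + pj.2 + 1), fglA F pi.2 pj.2 n * fglA F n pl.2 b) := by
  calc
    ∑ n ∈ range (i + j + 1), fglA F i j n * fglA F n l (a + b)
      = ∑ n ∈ range (i + j + 1), ∑ pn ∈ antidiagonal n, ∑ pl ∈ antidiagonal l,
          fglA F i j (pn.1 + pn.2) * (fglA F pn.1 pl.1 a * fglA F pn.2 pl.2 b) := by
        refine Finset.sum_congr rfl fun n hn => ?_
        rw [coprod F n l a b, Finset.mul_sum]
        refine Finset.sum_congr rfl fun pn hpn => ?_
        rw [Finset.mul_sum]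
        refine Finset.sum_congr rfl fun pl _ => ?_
        rw [Finset.HasAntidiagonal.mem_antidiagonal] at hpn
        rw [hpn]
    _ = ∑ pl ∈ antidiagonal l, ∑ n ∈ range (i + j + 1), ∑ pn ∈ antidiagonal n,
          fglA F i j (pn.1 + pn.2) * (fglA F pn.1 pl.1 a * fglA F pn.2 pl.2 b) :=
        (Finset.sum_congr rfl fun n _ => Finset.sum_comm).trans Finset.sum_comm
    _ = ∑ pl ∈ antidiagonal l, ∑ u ∈ range (i + j + 1), ∑ v ∈ range (i + j + 1),
          fglA F i j (u + v) * (fglA F u pl.1 a * fglA F v pl.2 b) := by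
        refine Finset.sum_congr rfl fun pl _ => ?_
        exact triangle (i + j)
          (fun u v => fglA F i j (u + v) * (fglA F u pl.1 a * fglA F v pl.2 b))
          (fun u v huv => by rw [vanA F hF i j (u + v) huv, zero_mul])
    _ = ∑ pl ∈ antidiagonal l, ∑ u ∈ range (i + j + 1), ∑ v ∈ range (i + j + 1),
          ∑ pi ∈ antidiagonal i, ∑ pj ∈ antidiagonal j,
          (fglA F pi.1 pj.1 u * fglA F u pl.1 a) * (fglA F pi.2 pj.2 v * fglA F v pl.2 b) := by
        refine Finset.sum_congr rfl fun pl _ => Finset.sum_congr rfl fun u _ =>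
          Finset.sum_congr rfl fun v _ => ?_
        rw [coprod F i j u v, Finset.sum_mul]
        refine Finset.sum_congr rfl fun pi _ => ?_
        rw [Finset.sum_mul]
        refine Finset.sum_congr rfl fun pj _ => ?_
        ring
    _ = ∑ pl ∈ antidiagonal l, ∑ pi ∈ antidiagonal i, ∑ pj ∈ antidiagonal j,
          ∑ u ∈ range (i + j + 1), ∑ v ∈ range (i + j + 1),
          (fglA F pi.1 pj.1 u * fglA F u pl.1 a) * (fglA F pi.2 pj.2 v * fglA F v pl.2 b) := by
        refine Finset.sum_congr rfl fun pl _ => ?_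
        calc
          ∑ u ∈ range (i + j + 1), ∑ v ∈ range (i + j + 1),
            ∑ pi ∈ antidiagonal i, ∑ pj ∈ antidiagonal j,
            (fglA F pi.1 pj.1 u * fglA F u pl.1 a) * (fglA F pi.2 pj.2 v * fglA F v pl.2 b)
            = ∑ u ∈ range (i + j + 1), ∑ pi ∈ antidiagonal i, ∑ v ∈ range (i + j + 1),
              ∑ pj ∈ antidiagonal j,
              (fglA F pi.1 pj.1 u * fglA F u pl.1 a) * (fglA F pi.2 pj.2 v * fglA F v pl.2 b) :=
              Finset.sum_congr rfl fun u _ => Finset.sum_comm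
          _ = ∑ u ∈ range (i + j + 1), ∑ pi ∈ antidiagonal i, ∑ pj ∈ antidiagonal j,
              ∑ v ∈ range (i + j + 1),
              (fglA F pi.1 pj.1 u * fglA F u pl.1 a) * (fglA F pi.2 pj.2 v * fglA F v pl.2 b) :=
              Finset.sum_congr rfl fun u _ => Finset.sum_congr rfl fun pi _ => Finset.sum_comm
          _ = ∑ pi ∈ antidiagonal i, ∑ u ∈ range (i + j + 1), ∑ pj ∈ antidiagonal j,
              ∑ v ∈ range (i + j + 1),
              (fglA F pi.1 pj.1 u * fglA F u pl.1 a) * (fglA F pi.2 pj.2 v * fglA F v pl.2 b) :=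
              Finset.sum_comm
          _ = ∑ pi ∈ antidiagonal i, ∑ pj ∈ antidiagonal j, ∑ u ∈ range (i + j + 1),
              ∑ v ∈ range (i + j + 1),
              (fglA F pi.1 pj.1 u * fglA F u pl.1 a) * (fglA F pi.2 pj.2 v * fglA F v pl.2 b) :=
              Finset.sum_congr rfl fun pi _ => Finset.sum_comm
    _ = ∑ pl ∈ antidiagonal l, ∑ pi ∈ antidiagonal i, ∑ pj ∈ antidiagonal j,
          (∑ n ∈ range (pi.1 + pj.1 + 1), fglA F pi.1 pj.1 n * fglA F n pl.1 a)
        * (∑ n ∈ range (pi.2 + pj.2 + 1), fglA F pi.2 pj.2 n * fglA F n pl.2 b) := by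
        refine Finset.sum_congr rfl fun pl _ => Finset.sum_congr rfl fun pi hpi =>
          Finset.sum_congr rfl fun pj hpj => ?_
        rw [Finset.HasAntidiagonal.mem_antidiagonal] at hpi hpj
        have hru : ∑ n ∈ range (pi.1 + pj.1 + 1), fglA F pi.1 pj.1 n * fglA F n pl.1 a
            = ∑ n ∈ range (i + j + 1), fglA F pi.1 pj.1 n * fglA F n pl.1 a := by
          refine Finset.sum_subset (Finset.range_subset_range.2 (by omega)) fun n _ hn => ?_
          rw [Finset.mem_range, not_lt] at hn
          rw [vanA F hF _ _ n (by omega), zero_mul]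
        have hrv : ∑ n ∈ range (pi.2 + pj.2 + 1), fglA F pi.2 pj.2 n * fglA F n pl.2 b
            = ∑ n ∈ range (i + j + 1), fglA F pi.2 pj.2 n * fglA F n pl.2 b := by
          refine Finset.sum_subset (Finset.range_subset_range.2 (by omega)) fun n _ hn => ?_
          rw [Finset.mem_range, not_lt] at hn
          rw [vanA F hF _ _ n (by omega), zero_mul]
        rw [hru, hrv, Finset.sum_mul_sum]
    _ = ∑ pi ∈ antidiagonal i, ∑ pj ∈ antidiagonal j, ∑ pl ∈ antidiagonal l,
          (∑ n ∈ range (pi.1 + pj.1 + 1), fglA F pi.1 pj.1 n * fglA F n pl.1 a)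
        * (∑ n ∈ range (pi.2 + pj.2 + 1), fglA F pi.2 pj.2 n * fglA F n pl.2 b) :=
        Finset.sum_comm.trans (Finset.sum_congr rfl fun pi _ => Finset.sum_comm)

lemma Cconv (hF : IsFormalGroupLaw F) (a b i j l : ℕ) :
    ∑ m ∈ range (j + l + 1), fglA F j l m * fglA F i m (a + b)
    = ∑ pi ∈ antidiagonal i, ∑ pj ∈ antidiagonal j, ∑ pl ∈ antidiagonal l,
        (∑ m ∈ range (pj.1 + pl.1 + 1), fglA F pj.1 pl.1 m * fglA F pi.1 m a)
      * (∑ m ∈ range (pj.2 + pl.2 + 1), fglA F pj.2 pl.2 m * fglA F pi.2 m b) := by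
  calc
    ∑ m ∈ range (j + l + 1), fglA F j l m * fglA F i m (a + b)
      = ∑ m ∈ range (j + l + 1), ∑ pi ∈ antidiagonal i, ∑ pm ∈ antidiagonal m,
          fglA F j l (pm.1 + pm.2) * (fglA F pi.1 pm.1 a * fglA F pi.2 pm.2 b) := by
        refine Finset.sum_congr rfl fun m hm => ?_
        rw [coprod F i m a b, Finset.mul_sum]
        refine Finset.sum_congr rfl fun pi _ => ?_
        rw [Finset.mul_sum]
        refine Finset.sum_congr rfl fun pm hpm => ?_
        rw [Finset.HasAntidiagonal.mem_antidiagonal] at hpm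
        rw [hpm]
    _ = ∑ pi ∈ antidiagonal i, ∑ m ∈ range (j + l + 1), ∑ pm ∈ antidiagonal m,
          fglA F j l (pm.1 + pm.2) * (fglA F pi.1 pm.1 a * fglA F pi.2 pm.2 b) :=
        Finset.sum_comm
    _ = ∑ pi ∈ antidiagonal i, ∑ u ∈ range (j + l + 1), ∑ v ∈ range (j + l + 1),
          fglA F j l (u + v) * (fglA F pi.1 u a * fglA F pi.2 v b) := by
        refine Finset.sum_congr rfl fun pi _ => ?_
        exact triangle (j + l)
          (fun u v => fglA F j l (u + v) * (fglA F pi.1 u a * fglA F pi.2 v b))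
          (fun u v huv => by rw [vanA F hF j l (u + v) huv, zero_mul])
    _ = ∑ pi ∈ antidiagonal i, ∑ u ∈ range (j + l + 1), ∑ v ∈ range (j + l + 1),
          ∑ pj ∈ antidiagonal j, ∑ pl ∈ antidiagonal l,
          (fglA F pj.1 pl.1 u * fglA F pi.1 u a) * (fglA F pj.2 pl.2 v * fglA F pi.2 v b) := by
        refine Finset.sum_congr rfl fun pi _ => Finset.sum_congr rfl fun u _ =>
          Finset.sum_congr rfl fun v _ => ?_
        rw [coprod F j l u v, Finset.sum_mul]
        refine Finset.sum_congr rfl fun pj _ => ?_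
        rw [Finset.sum_mul]
        refine Finset.sum_congr rfl fun pl _ => ?_
        ring
    _ = ∑ pi ∈ antidiagonal i, ∑ pj ∈ antidiagonal j, ∑ pl ∈ antidiagonal l,
          ∑ u ∈ range (j + l + 1), ∑ v ∈ range (j + l + 1),
          (fglA F pj.1 pl.1 u * fglA F pi.1 u a) * (fglA F pj.2 pl.2 v * fglA F pi.2 v b) := by
        refine Finset.sum_congr rfl fun pi _ => ?_
        calc
          ∑ u ∈ range (j + l + 1), ∑ v ∈ range (j + l + 1),
            ∑ pj ∈ antidiagonal j, ∑ pl ∈ antidiagonal l,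
            (fglA F pj.1 pl.1 u * fglA F pi.1 u a) * (fglA F pj.2 pl.2 v * fglA F pi.2 v b)
            = ∑ u ∈ range (j + l + 1), ∑ pj ∈ antidiagonal j, ∑ v ∈ range (j + l + 1),
              ∑ pl ∈ antidiagonal l,
              (fglA F pj.1 pl.1 u * fglA F pi.1 u a) * (fglA F pj.2 pl.2 v * fglA F pi.2 v b) :=
              Finset.sum_congr rfl fun u _ => Finset.sum_comm
          _ = ∑ u ∈ range (j + l + 1), ∑ pj ∈ antidiagonal j, ∑ pl ∈ antidiagonal l,
              ∑ v ∈ range (j + l + 1),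
              (fglA F pj.1 pl.1 u * fglA F pi.1 u a) * (fglA F pj.2 pl.2 v * fglA F pi.2 v b) :=
              Finset.sum_congr rfl fun u _ => Finset.sum_congr rfl fun pj _ => Finset.sum_comm
          _ = ∑ pj ∈ antidiagonal j, ∑ u ∈ range (j + l + 1), ∑ pl ∈ antidiagonal l,
              ∑ v ∈ range (j + l + 1),
              (fglA F pj.1 pl.1 u * fglA F pi.1 u a) * (fglA F pj.2 pl.2 v * fglA F pi.2 v b) :=
              Finset.sum_comm
          _ = ∑ pj ∈ antidiagonal j, ∑ pl ∈ antidiagonal l, ∑ u ∈ range (j + l + 1),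
              ∑ v ∈ range (j + l + 1),
              (fglA F pj.1 pl.1 u * fglA F pi.1 u a) * (fglA F pj.2 pl.2 v * fglA F pi.2 v b) :=
              Finset.sum_congr rfl fun pj _ => Finset.sum_comm
    _ = ∑ pi ∈ antidiagonal i, ∑ pj ∈ antidiagonal j, ∑ pl ∈ antidiagonal l,
          (∑ m ∈ range (pj.1 + pl.1 + 1), fglA F pj.1 pl.1 m * fglA F pi.1 m a)
        * (∑ m ∈ range (pj.2 + pl.2 + 1), fglA F pj.2 pl.2 m * fglA F pi.2 m b) := by
        refine Finset.sum_congr rfl fun pi _ => Finset.sum_congr rfl fun pj hpj =>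
          Finset.sum_congr rfl fun pl hpl => ?_
        rw [Finset.HasAntidiagonal.mem_antidiagonal] at hpj hpl
        have hru : ∑ m ∈ range (pj.1 + pl.1 + 1), fglA F pj.1 pl.1 m * fglA F pi.1 m a
            = ∑ m ∈ range (j + l + 1), fglA F pj.1 pl.1 m * fglA F pi.1 m a := by
          refine Finset.sum_subset (Finset.range_subset_range.2 (by omega)) fun m _ hm => ?_
          rw [Finset.mem_range, not_lt] at hm
          rw [vanA F hF _ _ m (by omega), zero_mul]
        have hrv : ∑ m ∈ range (pj.2 + pl.2 + 1), fglA F pj.2 pl.2 m * fglA F pi.2 m b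
            = ∑ m ∈ range (j + l + 1), fglA F pj.2 pl.2 m * fglA F pi.2 m b := by
          refine Finset.sum_subset (Finset.range_subset_range.2 (by omega)) fun m _ hm => ?_
          rw [Finset.mem_range, not_lt] at hm
          rw [vanA F hF _ _ m (by omega), zero_mul]
        rw [hru, hrv, Finset.sum_mul_sum]

lemma BC1 (hF : IsFormalGroupLaw F) (i j l : ℕ) :
    ∑ n ∈ range (i + j + 1), fglA F i j n * fglA F n l 1
      = ∑ m ∈ range (j + l + 1), fglA F j l m * fglA F i m 1 := by
  have h := hF.2.2 i j l
  calc
    ∑ n ∈ range (i + j + 1), fglA F i j n * fglA F n l 1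
      = ∑ n ∈ range (i + j + 1), fglCoeff F n l * fglA F i j n := by
        refine Finset.sum_congr rfl fun n _ => ?_
        rw [A_one, mul_comm]
    _ = ∑ m ∈ range (j + l + 1), fglCoeff F i m * fglA F j l m := h
    _ = ∑ m ∈ range (j + l + 1), fglA F j l m * fglA F i m 1 := by
        refine Finset.sum_congr rfl fun m _ => ?_
        rw [A_one, mul_comm]

lemma L4 (hF : IsFormalGroupLaw F) :
    ∀ a i j l : ℕ, ∑ n ∈ range (i + j + 1), fglA F i j n * fglA F n l a
      = ∑ m ∈ range (j + l + 1), fglA F j l m * fglA F i m a := by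
  intro a
  induction a with
  | zero =>
    intro i j l
    have hL : ∑ n ∈ range (i + j + 1), fglA F i j n * fglA F n l 0
        = fglA F i j 0 * fglA F 0 l 0 := by
      refine Finset.sum_eq_single 0 (fun n _ hn => ?_) (fun h => absurd (Finset.mem_range.2 (by omega)) h)
      rw [A_zero F n l, if_neg (by tauto), mul_zero]
    have hR : ∑ m ∈ range (j + l + 1), fglA F j l m * fglA F i m 0
        = fglA F j l 0 * fglA F i 0 0 := by
      refine Finset.sum_eq_single 0 (fun m _ hm => ?_) (fun h => absurd (Finset.mem_range.2 (by omega)) h)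
      rw [A_zero F i m, if_neg (by tauto), mul_zero]
    rw [hL, hR, A_zero, A_zero, A_zero, A_zero]
    by_cases hi : i = 0 <;> by_cases hj : j = 0 <;> by_cases hl : l = 0 <;>
      simp [hi, hj, hl]
  | succ a ih =>
    intro i j l
    rw [Bconv F hF a 1 i j l, Cconv F hF a 1 i j l]
    refine Finset.sum_congr rfl fun pi _ => Finset.sum_congr rfl fun pj _ =>
      Finset.sum_congr rfl fun pl _ => ?_
    rw [ih pi.1 pj.1 pl.1, BC1 F hF pi.2 pj.2 pl.2]

end FGLAux

/-- For a formal group law `F` over a field `k`, the maps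
`∂_n(r) := (coefficient of X^n in r(F(t,X)))` form an `F`-iterative HS-derivation on
`k⟦t⟧` over `k` with `∂_n(t) = (coefficient of X^n in F(t,X))`:
the canonical `F`-derivation. Here the coefficient of `t^i X^n` in `r(F(t,X)) = Σ_m r_m F^m`
is `Σ_{m ≤ i+n} r_m ⬝ (coefficient of t^i X^n in F^m)`. -/
theorem canonical_F_derivation
    (k : Type*) [Field k] (F : MvPowerSeries (Fin 2) k) (hF : IsFormalGroupLaw F)
    (D : ℕ → PowerSeries k → PowerSeries k)
    (hD : ∀ n r, D n r = PowerSeries.mk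
      fun i => ∑ m ∈ Finset.range (i + n + 1), PowerSeries.coeff m r * fglA F i n m) :
    D 0 = id ∧
    (∀ n x y, D n (x + y) = D n x + D n y) ∧
    (∀ n x y, D n (x * y) = ∑ jl ∈ Finset.HasAntidiagonal.antidiagonal n, D jl.1 x * D jl.2 y) ∧
    (∀ c : k, ∀ n, 0 < n → D n (PowerSeries.C c) = 0) ∧
    (∀ i j x, D i (D j x) = ∑ n ∈ Finset.range (i + j + 1), fglA F i j n • D n x) ∧
    (∀ n, D n PowerSeries.X = PowerSeries.mk fun i => fglCoeff F i n) := by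
  have h00 : fglCoeff F 0 0 = 0 := by simpa using hF.1 0
  refine ⟨?_, ?_, ?_, ?_, ?_, ?_⟩
  · -- D 0 = id
    funext r
    apply PowerSeries.ext
    intro i
    rw [hD, PowerSeries.coeff_mk]
    have hcol : ∑ m ∈ range (i + 0 + 1), PowerSeries.coeff m r * fglA F i 0 m
        = PowerSeries.coeff i r * fglA F i 0 i := by
      apply Finset.sum_eq_single
      · intro m _ hm
        rw [unitX F hF m i, if_neg (fun hc => hm hc.symm), mul_zero]
      · intro hmem
        exact absurd (Finset.mem_range.2 (by omega)) hmem
    rw [hcol, unitX F hF i i, if_pos rfl, mul_one]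
    rfl
  · -- additivity
    intro n x y
    rw [hD, hD, hD]
    apply PowerSeries.ext
    intro i
    simp [PowerSeries.coeff_mk, add_mul, Finset.sum_add_distrib]
  · -- multiplicativity
    intro n x y
    apply PowerSeries.ext
    intro i
    rw [hD, PowerSeries.coeff_mk, map_sum]
    have hR : ∀ jl ∈ antidiagonal n, PowerSeries.coeff i (D jl.1 x * D jl.2 y)
        = ∑ pq ∈ antidiagonal i,
            (∑ a ∈ range (pq.1 + jl.1 + 1), PowerSeries.coeff a x * fglA F pq.1 jl.1 a)
          * (∑ b ∈ range (pq.2 + jl.2 + 1), PowerSeries.coeff b y * fglA F pq.2 jl.2 b) := by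
      intro jl _
      rw [PowerSeries.coeff_mul]
      refine Finset.sum_congr rfl fun pq _ => ?_
      rw [hD, hD, PowerSeries.coeff_mk, PowerSeries.coeff_mk]
    rw [Finset.sum_congr rfl hR]
    calc
      ∑ m ∈ range (i + n + 1), PowerSeries.coeff m (x * y) * fglA F i n m
        = ∑ m ∈ range (i + n + 1), ∑ ab ∈ antidiagonal m, ∑ pq ∈ antidiagonal i,
            ∑ rs ∈ antidiagonal n,
            (PowerSeries.coeff ab.1 x * fglA F pq.1 rs.1 ab.1)
          * (PowerSeries.coeff ab.2 y * fglA F pq.2 rs.2 ab.2) := by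
          refine Finset.sum_congr rfl fun m _ => ?_
          rw [PowerSeries.coeff_mul, Finset.sum_mul]
          refine Finset.sum_congr rfl fun ab hab => ?_
          rw [Finset.HasAntidiagonal.mem_antidiagonal] at hab
          rw [← hab, coprod F i n ab.1 ab.2, Finset.mul_sum]
          refine Finset.sum_congr rfl fun pq _ => ?_
          rw [Finset.mul_sum]
          refine Finset.sum_congr rfl fun rs _ => ?_
          ring
      _ = ∑ m ∈ range (i + n + 1), ∑ pq ∈ antidiagonal i, ∑ rs ∈ antidiagonal n,
            ∑ ab ∈ antidiagonal m,
            (PowerSeries.coeff ab.1 x * fglA F pq.1 rs.1 ab.1)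
          * (PowerSeries.coeff ab.2 y * fglA F pq.2 rs.2 ab.2) := by
          refine Finset.sum_congr rfl fun m _ => ?_
          exact Finset.sum_comm.trans (Finset.sum_congr rfl fun pq _ => Finset.sum_comm)
      _ = ∑ pq ∈ antidiagonal i, ∑ rs ∈ antidiagonal n, ∑ m ∈ range (i + n + 1),
            ∑ ab ∈ antidiagonal m,
            (PowerSeries.coeff ab.1 x * fglA F pq.1 rs.1 ab.1)
          * (PowerSeries.coeff ab.2 y * fglA F pq.2 rs.2 ab.2) :=
          Finset.sum_comm.trans (Finset.sum_congr rfl fun pq _ => Finset.sum_comm)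
      _ = ∑ pq ∈ antidiagonal i, ∑ rs ∈ antidiagonal n,
            (∑ a ∈ range (pq.1 + rs.1 + 1), PowerSeries.coeff a x * fglA F pq.1 rs.1 a)
          * (∑ b ∈ range (pq.2 + rs.2 + 1), PowerSeries.coeff b y * fglA F pq.2 rs.2 b) := by
          refine Finset.sum_congr rfl fun pq hpq => Finset.sum_congr rfl fun rs hrs => ?_
          rw [Finset.HasAntidiagonal.mem_antidiagonal] at hpq hrs
          have hrange : i + n + 1 = pq.1 + rs.1 + (pq.2 + rs.2) + 1 := by omega
          have ht := triangle' (pq.1 + rs.1) (pq.2 + rs.2)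
            (fun a b => (PowerSeries.coeff a x * fglA F pq.1 rs.1 a)
              * (PowerSeries.coeff b y * fglA F pq.2 rs.2 b))
            (fun a b hab => by
              rcases hab with h | h
              · rw [vanA F hF _ _ a (by omega), mul_zero, zero_mul]
              · rw [vanA F hF _ _ b (by omega), mul_zero, mul_zero])
          rw [hrange, ht, ← Finset.sum_mul_sum]
      _ = ∑ jl ∈ antidiagonal n, ∑ pq ∈ antidiagonal i,
            (∑ a ∈ range (pq.1 + jl.1 + 1), PowerSeries.coeff a x * fglA F pq.1 jl.1 a)
          * (∑ b ∈ range (pq.2 + jl.2 + 1), PowerSeries.coeff b y * fglA F pq.2 jl.2 b) :=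
          Finset.sum_comm
  · -- vanishing on constants
    intro c n hn
    rw [hD]
    apply PowerSeries.ext
    intro i
    rw [PowerSeries.coeff_mk, map_zero]
    apply Finset.sum_eq_zero
    intro m _
    by_cases h : m = 0
    · subst h
      rw [A_zero F i n, if_neg (by rintro ⟨_, h0⟩; omega), mul_zero]
    · rw [PowerSeries.coeff_C, if_neg h, zero_mul]
  · -- iterativity
    intro i j x
    apply PowerSeries.ext
    intro p
    rw [hD i, PowerSeries.coeff_mk, map_sum]
    have hRn : ∀ n ∈ range (i + j + 1), PowerSeries.coeff p (fglA F i j n • D n x)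
        = fglA F i j n * ∑ a ∈ range (p + i + j + 1),
            PowerSeries.coeff a x * fglA F p n a := by
      intro n hn
      rw [Finset.mem_range] at hn
      rw [PowerSeries.coeff_smul, hD, PowerSeries.coeff_mk, smul_eq_mul]
      congr 1
      refine Finset.sum_subset (Finset.range_subset_range.2 (by omega)) fun a _ ha => ?_
      rw [Finset.mem_range, not_lt] at ha
      rw [vanA F hF _ _ a (by omega), mul_zero]
    rw [Finset.sum_congr rfl hRn]
    have hLm : ∀ m ∈ range (p + i + 1), PowerSeries.coeff m (D j x) * fglA F p i m
        = (∑ a ∈ range (p + i + j + 1), PowerSeries.coeff a x * fglA F m j a)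
          * fglA F p i m := by
      intro m hm
      rw [Finset.mem_range] at hm
      rw [hD, PowerSeries.coeff_mk]
      congr 1
      refine Finset.sum_subset (Finset.range_subset_range.2 (by omega)) fun a _ ha => ?_
      rw [Finset.mem_range, not_lt] at ha
      rw [vanA F hF _ _ a (by omega), mul_zero]
    rw [Finset.sum_congr rfl hLm]
    calc
      ∑ m ∈ range (p + i + 1),
          (∑ a ∈ range (p + i + j + 1), PowerSeries.coeff a x * fglA F m j a)
            * fglA F p i m
        = ∑ m ∈ range (p + i + 1), ∑ a ∈ range (p + i + j + 1),
            PowerSeries.coeff a x * (fglA F p i m * fglA F m j a) := by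
          refine Finset.sum_congr rfl fun m _ => ?_
          rw [Finset.sum_mul]
          refine Finset.sum_congr rfl fun a _ => ?_
          ring
      _ = ∑ a ∈ range (p + i + j + 1), ∑ m ∈ range (p + i + 1),
            PowerSeries.coeff a x * (fglA F p i m * fglA F m j a) := Finset.sum_comm
      _ = ∑ a ∈ range (p + i + j + 1), PowerSeries.coeff a x
            * ∑ m ∈ range (p + i + 1), fglA F p i m * fglA F m j a := by
          refine Finset.sum_congr rfl fun a _ => ?_
          rw [Finset.mul_sum]
      _ = ∑ a ∈ range (p + i + j + 1), PowerSeries.coeff a x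
            * ∑ nn ∈ range (i + j + 1), fglA F i j nn * fglA F p nn a := by
          refine Finset.sum_congr rfl fun a _ => ?_
          rw [L4 F hF a p i j]
      _ = ∑ a ∈ range (p + i + j + 1), ∑ nn ∈ range (i + j + 1),
            fglA F i j nn * (PowerSeries.coeff a x * fglA F p nn a) := by
          refine Finset.sum_congr rfl fun a _ => ?_
          rw [Finset.mul_sum]
          refine Finset.sum_congr rfl fun nn _ => ?_
          ring
      _ = ∑ nn ∈ range (i + j + 1), ∑ a ∈ range (p + i + j + 1),
            fglA F i j nn * (PowerSeries.coeff a x * fglA F p nn a) := Finset.sum_comm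
      _ = ∑ nn ∈ range (i + j + 1), fglA F i j nn
            * ∑ a ∈ range (p + i + j + 1), PowerSeries.coeff a x * fglA F p nn a := by
          refine Finset.sum_congr rfl fun nn _ => ?_
          rw [Finset.mul_sum]
  · -- value on X
    intro n
    rw [hD]
    apply PowerSeries.ext
    intro i
    rw [PowerSeries.coeff_mk, PowerSeries.coeff_mk]
    have hcol : ∑ m ∈ range (i + n + 1), PowerSeries.coeff m PowerSeries.X * fglA F i n m
        = PowerSeries.coeff 1 PowerSeries.X * fglA F i n 1 := by
      apply Finset.sum_eq_single
      · intro m _ hm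
        rw [PowerSeries.coeff_X, if_neg hm, zero_mul]
      · intro h
        rw [Finset.mem_range, not_lt] at h
        have hi : i = 0 := by omega
        have hn : n = 0 := by omega
        subst hi; subst hn
        rw [A_one, h00, mul_zero]
    rw [hcol, PowerSeries.coeff_one_X, one_mul, A_one]
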